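/- If f : 2^[n] → ℝ is submodular with f(∅) = 0, then its Lovász extension f^L : ℝ^n → ℝ is convex. -/

import Mathlib

open Finset

/-- The Lovász extension of a set function `f : 2^[n] → ℝ` (with `f ∅ = 0`):
order the coordinates of `x` decreasingly via a permutation `σ` (obtained by sorting
`-x` increasingly), and set
`f^L(x) = ∑ₖ x(σ k) * (f {σ 0, …, σ k} − f {σ 0, …, σ (k-1)})`. -/
noncomputable def lovasz {n : ℕ} (f : Finset (Fin n) → ℝ) (x : Fin n → ℝ) : ℝ :=
  ∑ k : Fin n,
    x (Tuple.sort (fun i => -x i) k) *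
      (f ((Finset.univ.filter (fun j : Fin n => j ≤ k)).image (Tuple.sort (fun i => -x i)))
        - f ((Finset.univ.filter (fun j : Fin n => j < k)).image (Tuple.sort (fun i => -x i))))

namespace LovaszAux

variable {n : ℕ}

/-- prefix set of a permutation: images of indices `< m`. -/
noncomputable def pre (τ : Equiv.Perm (Fin n)) (m : ℕ) : Finset (Fin n) :=
  (univ.filter (fun j : Fin n => (j : ℕ) < m)).image τ

lemma pre_zero (τ : Equiv.Perm (Fin n)) : pre τ 0 = ∅ := by
  simp [pre]

lemma pre_of_le (τ : Equiv.Perm (Fin n)) {m : ℕ} (h : n ≤ m) : pre τ m = univ := by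
  apply Finset.eq_univ_of_card
  rw [pre, Finset.card_image_of_injective _ τ.injective]
  have : (univ.filter (fun j : Fin n => (j : ℕ) < m)) = univ := by
    apply Finset.eq_univ_iff_forall.2
    intro j
    simp [lt_of_lt_of_le j.isLt h]
  rw [this, card_univ, Fintype.card_fin]

lemma mem_pre {τ : Equiv.Perm (Fin n)} {m : ℕ} {i : Fin n} :
    i ∈ pre τ m ↔ ((τ.symm i : Fin n) : ℕ) < m := by
  constructor
  · rintro hi
    simp only [pre, mem_image, mem_filter, mem_univ, true_and] at hi
    obtain ⟨j, hj, rfl⟩ := hi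
    simpa using hj
  · intro h
    simp only [pre, mem_image, mem_filter, mem_univ, true_and]
    exact ⟨τ.symm i, h, by simp⟩

lemma pre_succ {τ : Equiv.Perm (Fin n)} {m : ℕ} (hm : m < n) :
    pre τ (m + 1) = insert (τ ⟨m, hm⟩) (pre τ m) := by
  ext i
  simp only [mem_pre, mem_insert, Nat.lt_succ_iff_lt_or_eq]
  constructor
  · rintro (h | h)
    · exact Or.inr h
    · left
      have h2 : τ.symm i = ⟨m, hm⟩ := Fin.ext h
      rw [← h2]; simp
  · rintro (h | h)
    · right
      subst h
      simp
    · exact Or.inl h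

lemma not_mem_pre_self {τ : Equiv.Perm (Fin n)} {m : ℕ} (hm : m < n) :
    τ ⟨m, hm⟩ ∉ pre τ m := by
  simp [mem_pre]

/-- Increment of `f` along the chain of `τ`. -/
noncomputable def zinc (f : Finset (Fin n) → ℝ) (τ : Equiv.Perm (Fin n)) (m : ℕ) : ℝ :=
  f (pre τ (m + 1)) - f (pre τ m)

lemma sum_zinc (f : Finset (Fin n) → ℝ) (hf : f ∅ = 0) (τ : Equiv.Perm (Fin n)) (M : ℕ) :
    ∑ m ∈ Finset.range M, zinc f τ m = f (pre τ M) := by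
  have := Finset.sum_range_sub (fun m => f (pre τ m)) M
  simpa [zinc, pre_zero, hf] using this

/-- Greedy feasibility: the greedy increments lie in the "base polytope". -/
lemma greedy_le (f : Finset (Fin n) → ℝ) (hf : f ∅ = 0)
    (hsub : ∀ S T : Finset (Fin n), f (S ∩ T) + f (S ∪ T) ≤ f S + f T)
    (τ : Equiv.Perm (Fin n)) :
    ∀ M : ℕ, ∀ B : Finset (Fin n), (∀ k ∈ B, (k : ℕ) < M) →
      ∑ k ∈ B, zinc f τ (k : ℕ) ≤ f (B.image τ) := by
  intro M
  induction M with
  | zero =>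
    intro B hB
    have : B = ∅ := Finset.eq_empty_of_forall_notMem (fun k hk => Nat.not_lt_zero _ (hB k hk))
    subst this
    simp [hf]
  | succ M ih =>
    intro B hB
    by_cases hM : ∃ k ∈ B, (k : ℕ) = M
    · obtain ⟨km, hkm, hkmv⟩ := hM
      have hmn : M < n := hkmv ▸ km.isLt
      have hkm' : km = ⟨M, hmn⟩ := Fin.ext hkmv
      -- the erased set
      set B' := B.erase km with hB'
      have hB'lt : ∀ k ∈ B', (k : ℕ) < M := by
        intro k hk
        have h1 : k ≠ km := Finset.ne_of_mem_erase hk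
        have h2 : (k : ℕ) < M + 1 := hB k (Finset.mem_of_mem_erase hk)
        have h3 : (k : ℕ) ≠ M := fun h => h1 (Fin.ext (h.trans hkmv.symm))
        omega
      have hIH := ih B' hB'lt
      have hsubset : B'.image τ ⊆ pre τ M := by
        intro i hi
        obtain ⟨k, hk, rfl⟩ := Finset.mem_image.1 hi
        rw [mem_pre]
        simpa using hB'lt k hk
      have himB : B.image τ = insert (τ ⟨M, hmn⟩) (B'.image τ) := by
        rw [hB', ← hkm']
        rw [← Finset.image_insert, Finset.insert_erase hkm]
      have hnm : τ ⟨M, hmn⟩ ∉ pre τ M := not_mem_pre_self hmn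
      have hinter : (B.image τ) ∩ pre τ M = B'.image τ := by
        apply Finset.Subset.antisymm
        · intro i hi
          rw [Finset.mem_inter, himB, Finset.mem_insert] at hi
          rcases hi.1 with h | h
          · exact absurd (h ▸ hi.2) hnm
          · exact h
        · intro i hi
          rw [Finset.mem_inter, himB]
          exact ⟨Finset.mem_insert_of_mem hi, hsubset hi⟩
      have hunion : (B.image τ) ∪ pre τ M = pre τ (M + 1) := by
        rw [himB, pre_succ hmn]
        apply Finset.Subset.antisymm
        · intro i hi
          rcases Finset.mem_union.1 hi with h | h
          · rcases Finset.mem_insert.1 h with h | h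
            · exact h ▸ Finset.mem_insert_self _ _
            · exact Finset.mem_insert_of_mem (hsubset h)
          · exact Finset.mem_insert_of_mem h
        · intro i hi
          rcases Finset.mem_insert.1 hi with h | h
          · exact Finset.mem_union_left _ (by rw [h]; exact Finset.mem_insert_self _ _)
          · exact Finset.mem_union_right _ h
      have hsm := hsub (B.image τ) (pre τ M)
      rw [hinter, hunion] at hsm
      have hsum : ∑ k ∈ B, zinc f τ (k : ℕ)
          = ∑ k ∈ B', zinc f τ (k : ℕ) + zinc f τ M := by
        rw [hB', ← hkmv]
        exact (Finset.sum_erase_add B _ hkm).symm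
      rw [hsum]
      have : zinc f τ M = f (pre τ (M+1)) - f (pre τ M) := rfl
      linarith
    · push_neg at hM
      apply ih B
      intro k hk
      have := hB k hk
      have := hM k hk
      omega

/-- Abel-summation nonnegativity. -/
lemma abel_nonneg (u D : ℕ → ℝ) (N : ℕ) (hu : ∀ m, m + 1 < N → u (m + 1) ≤ u m)
    (hD : ∀ m, m ≤ N → 0 ≤ D m) (h0 : D 0 = 0) (hN : D N = 0) :
    0 ≤ ∑ m ∈ Finset.range N, u m * (D (m + 1) - D m) := by
  cases N with
  | zero => simp
  | succ M =>
    have e1 : ∑ m ∈ Finset.range (M + 1), u m * (D (m + 1) - D m)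
        = ∑ m ∈ Finset.range (M + 1), u m * D (m + 1)
          - ∑ m ∈ Finset.range (M + 1), u m * D m := by
      rw [← Finset.sum_sub_distrib]
      apply Finset.sum_congr rfl
      intros; ring
    have e2 : ∑ m ∈ Finset.range (M + 1), u m * D (m + 1)
        = ∑ m ∈ Finset.range M, u m * D (m + 1) := by
      rw [Finset.sum_range_succ, hN, mul_zero, add_zero]
    have e3 : ∑ m ∈ Finset.range (M + 1), u m * D m
        = ∑ m ∈ Finset.range M, u (m + 1) * D (m + 1) := by
      rw [Finset.sum_range_succ', h0, mul_zero, add_zero]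
    rw [e1, e2, e3, ← Finset.sum_sub_distrib]
    apply Finset.sum_nonneg
    intro m hm
    rw [Finset.mem_range] at hm
    have h1 : u (m + 1) ≤ u m := hu m (by omega)
    have h2 : 0 ≤ D (m + 1) := hD (m + 1) (by omega)
    nlinarith

/-- The linear functional attached to a permutation. -/
noncomputable def gper (f : Finset (Fin n) → ℝ) (τ : Equiv.Perm (Fin n)) (x : Fin n → ℝ) : ℝ :=
  ∑ k : Fin n, x (τ k) * zinc f τ (k : ℕ)

lemma lovasz_eq (f : Finset (Fin n) → ℝ) (x : Fin n → ℝ) :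
    lovasz f x = gper f (Tuple.sort (fun i => -x i)) x := by
  unfold lovasz gper zinc pre
  apply Finset.sum_congr rfl
  intro k _
  have h1 : (univ.filter (fun j : Fin n => j ≤ k))
      = (univ.filter (fun j : Fin n => (j : ℕ) < (k : ℕ) + 1)) := by
    apply Finset.filter_congr
    intro j _
    rw [Fin.le_def, Nat.lt_succ_iff]
  have h2 : (univ.filter (fun j : Fin n => j < k))
      = (univ.filter (fun j : Fin n => (j : ℕ) < (k : ℕ))) := by
    apply Finset.filter_congr
    intro j _
    rw [Fin.lt_def]
  rw [h1, h2]

lemma gper_add_smul (f : Finset (Fin n) → ℝ) (τ : Equiv.Perm (Fin n)) (a b : ℝ)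
    (x y : Fin n → ℝ) :
    gper f τ (a • x + b • y) = a * gper f τ x + b * gper f τ y := by
  unfold gper
  rw [Finset.mul_sum, Finset.mul_sum, ← Finset.sum_add_distrib]
  apply Finset.sum_congr rfl
  intro k _
  simp only [Pi.add_apply, Pi.smul_apply, smul_eq_mul]
  ring

/-- The key greedy inequality: any permutation's linear functional is at most the
Lovász extension. -/
lemma gper_le_lovasz (f : Finset (Fin n) → ℝ) (hf : f ∅ = 0)
    (hsub : ∀ S T : Finset (Fin n), f (S ∩ T) + f (S ∪ T) ≤ f S + f T)
    (τ : Equiv.Perm (Fin n)) (x : Fin n → ℝ) :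
    gper f τ x ≤ lovasz f x := by
  set σ := Tuple.sort (fun i => -x i) with hσ
  rw [lovasz_eq f x, ← hσ]
  set y : Fin n → ℝ := fun i => zinc f τ ((τ.symm i : Fin n) : ℕ) with hy
  -- rewrite gper f τ x through y
  have hgτ : gper f τ x = ∑ k : Fin n, x (σ k) * y (σ k) := by
    have e1 : ∑ k : Fin n, x (τ k) * y (τ k) = ∑ i : Fin n, x i * y i :=
      Equiv.sum_comp τ (fun i => x i * y i)
    have e2 : ∑ k : Fin n, x (σ k) * y (σ k) = ∑ i : Fin n, x i * y i :=
      Equiv.sum_comp σ (fun i => x i * y i)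
    rw [e2, ← e1]
    unfold gper
    apply Finset.sum_congr rfl
    intro k _
    simp [hy]
  -- ℕ-indexed data
  set u : ℕ → ℝ := fun m => if h : m < n then x (σ ⟨m, h⟩) else 0 with hu
  set W : ℕ → ℝ := fun m => ∑ i ∈ pre σ m, y i with hW
  set F : ℕ → ℝ := fun m => f (pre σ m) with hF
  have hWsucc : ∀ (k : Fin n), W ((k : ℕ) + 1) - W (k : ℕ) = y (σ k) := by
    intro k
    have h1 : pre σ ((k : ℕ) + 1) = insert (σ ⟨(k : ℕ), k.isLt⟩) (pre σ (k : ℕ)) :=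
      pre_succ k.isLt
    rw [hW]
    simp only
    rw [h1, Finset.sum_insert (not_mem_pre_self k.isLt)]
    simp
  have hgτ2 : gper f τ x = ∑ m ∈ Finset.range n, u m * (W (m + 1) - W m) := by
    rw [hgτ, ← Fin.sum_univ_eq_sum_range (fun m => u m * (W (m + 1) - W m)) n]
    apply Finset.sum_congr rfl
    intro k _
    rw [hWsucc k]
    congr 1
    rw [hu]
    simp only [k.isLt, dif_pos]
  have hgσ : gper f σ x = ∑ m ∈ Finset.range n, u m * (F (m + 1) - F m) := by
    rw [← Fin.sum_univ_eq_sum_range (fun m => u m * (F (m + 1) - F m)) n]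
    unfold gper zinc
    apply Finset.sum_congr rfl
    intro k _
    congr 1
    rw [hu]
    simp only [k.isLt, dif_pos]
  -- feasibility : W m ≤ F m
  have hfeas : ∀ m : ℕ, W m ≤ F m := by
    intro m
    rw [hW, hF]
    simp only
    have hinj : Function.Injective (τ.symm : Fin n → Fin n) := τ.symm.injective
    have e : ∑ k ∈ (pre σ m).image (τ.symm : Fin n → Fin n), zinc f τ (k : ℕ)
        = ∑ i ∈ pre σ m, y i := by
      rw [Finset.sum_image (fun a _ b _ h => hinj h)]
    rw [← e]
    have h := greedy_le f hf hsub τ n ((pre σ m).image (τ.symm : Fin n → Fin n))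
      (fun k _ => k.isLt)
    have himg : ((pre σ m).image (τ.symm : Fin n → Fin n)).image τ = pre σ m := by
      rw [Finset.image_image]
      have : (τ : Fin n → Fin n) ∘ (τ.symm : Fin n → Fin n) = id := by
        funext i; simp
      rw [this, Finset.image_id]
    rw [himg] at h
    exact h
  -- endpoints
  have hW0 : W 0 = 0 := by rw [hW]; simp [pre_zero]
  have hF0 : F 0 = 0 := by rw [hF]; simp [pre_zero, hf]
  have hWn : W n = f Finset.univ := by
    rw [hW]
    simp only [pre_of_le σ le_rfl]
    have e1 : ∑ i : Fin n, y i = ∑ k : Fin n, zinc f τ (k : ℕ) := by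
      rw [← Equiv.sum_comp τ.symm (fun k => zinc f τ (k : ℕ))]
    rw [e1, Fin.sum_univ_eq_sum_range (fun m => zinc f τ m) n, sum_zinc f hf τ n,
      pre_of_le τ le_rfl]
  have hFn : F n = f Finset.univ := by
    show f (pre σ n) = f Finset.univ
    rw [pre_of_le σ le_rfl]
  -- monotonicity of u
  have humono : ∀ m, m + 1 < n → u (m + 1) ≤ u m := by
    intro m hm
    have hmn : m < n := by omega
    rw [hu]
    simp only [hm, hmn, dif_pos]
    have hmon := Tuple.monotone_sort (fun i => -x i)
    have : (⟨m, hmn⟩ : Fin n) ≤ ⟨m + 1, hm⟩ := by simp [Fin.le_def]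
    have h2 := hmon this
    simp only [Function.comp_apply, hσ] at h2 ⊢
    rw [← hσ] at h2
    linarith
  -- Abel
  have habel := abel_nonneg u (fun m => F m - W m) n humono
    (fun m _ => by have := hfeas m; simp; linarith)
    (by simp [hW0, hF0]) (by simp [hWn, hFn])
  have e : ∑ m ∈ Finset.range n, u m * ((F (m + 1) - W (m + 1)) - (F m - W m))
      = ∑ m ∈ Finset.range n, u m * (F (m + 1) - F m)
        - ∑ m ∈ Finset.range n, u m * (W (m + 1) - W m) := by
    rw [← Finset.sum_sub_distrib]
    apply Finset.sum_congr rfl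
    intros; ring
  rw [hgτ2, hgσ]
  linarith [e ▸ habel]

end LovaszAux

/-- the Lovász extension of a submodular function is convex on ℝⁿ. -/
theorem stmt3 {n : ℕ} (f : Finset (Fin n) → ℝ) (hf : f ∅ = 0)
    (hsub : ∀ S T : Finset (Fin n), f (S ∩ T) + f (S ∪ T) ≤ f S + f T) :
    ConvexOn ℝ Set.univ (lovasz f) := by
  refine ⟨convex_univ, ?_⟩
  intro x _ y _ a b ha hb hab
  set τ := Tuple.sort (fun i => -(a • x + b • y) i) with hτ
  have h1 : lovasz f (a • x + b • y) = LovaszAux.gper f τ (a • x + b • y) :=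
    LovaszAux.lovasz_eq f _
  rw [h1, LovaszAux.gper_add_smul]
  have hx := LovaszAux.gper_le_lovasz f hf hsub τ x
  have hy := LovaszAux.gper_le_lovasz f hf hsub τ y
  have h2 := add_le_add (mul_le_mul_of_nonneg_left hx ha) (mul_le_mul_of_nonneg_left hy hb)
  simpa [smul_eq_mul] using h2
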